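/- Let p ∈ (0,1], let x ∈ ℝ³ with |x| = 1 and let a ∈ [0,∞). Then ∫_{S²} |x - a z|^p dσ(z) ≥ 1 + (p(p+1)/6) a² if a ≤ 1, and ∫_{S²} |x - a z|^p dσ(z) ≥ a^p + p(2-p)/(3a) - p(1-p)/2 if a > 1. -/

import Mathlib

open MeasureTheory Metric Set
open scoped RealInnerProductSpace Pointwise

local notation "E2" => EuclideanSpace ℝ (Fin 2)
local notation "E3" => EuclideanSpace ℝ (Fin 3)

set_option linter.unusedTactic false
set_option linter.unreachableTactic false
set_option maxHeartbeats 1000000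


noncomputable def ββ : ENNReal := volume (ball (0:E2) 1)

lemma ββ_ne_top : ββ ≠ ⊤ := measure_ball_lt_top.ne

lemma ββ_ne_zero : ββ ≠ 0 := (measure_ball_pos _ _ one_pos).ne'

lemma vol_lt (c : ℝ) : volume {w : E2 | ‖w‖^2 < c} = ββ * ENNReal.ofReal c := by
  rcases le_or_gt c 0 with hc | hc
  · have : {w : E2 | ‖w‖^2 < c} = ∅ := by
      ext w; simp only [mem_setOf_eq, mem_empty_iff_false, iff_false, not_lt]
      exact hc.trans (sq_nonneg _)
    rw [this, measure_empty, ENNReal.ofReal_eq_zero.2 hc, mul_zero]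
  · have hset : {w : E2 | ‖w‖^2 < c} = ball (0:E2) (Real.sqrt c) := by
      ext w
      simp only [mem_setOf_eq, mem_ball, dist_zero_right]
      rw [← Real.lt_sqrt (norm_nonneg w)]
    rw [hset, Measure.addHaar_ball _ _ (Real.sqrt_nonneg c)]
    rw [finrank_euclideanSpace_fin, mul_comm]
    congr 1
    rw [Real.sq_sqrt hc.le]

lemma vol_le (c : ℝ) : volume {w : E2 | ‖w‖^2 ≤ c} = ββ * ENNReal.ofReal c := by
  rcases lt_or_ge c 0 with hc | hc
  · have : {w : E2 | ‖w‖^2 ≤ c} = ∅ := by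
      ext w; simp only [mem_setOf_eq, mem_empty_iff_false, iff_false, not_le]
      exact hc.trans_le (sq_nonneg _)
    rw [this, measure_empty, ENNReal.ofReal_eq_zero.2 hc.le, mul_zero]
  · have hset : {w : E2 | ‖w‖^2 ≤ c} = closedBall (0:E2) (Real.sqrt c) := by
      ext w
      simp only [mem_setOf_eq, mem_closedBall, dist_zero_right]
      rw [← Real.le_sqrt (norm_nonneg w) hc]
    rw [hset, Measure.addHaar_closedBall _ _ (Real.sqrt_nonneg c)]
    rw [finrank_euclideanSpace_fin, mul_comm]
    congr 1
    rw [Real.sq_sqrt hc]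

lemma vol_annulus {c₁ c₂ : ℝ} (h1 : 0 ≤ c₁) (h12 : c₁ ≤ c₂) :
    volume {w : E2 | ‖w‖^2 < c₂ ∧ c₁ ≤ ‖w‖^2} = ββ * ENNReal.ofReal (c₂ - c₁) := by
  have hset : {w : E2 | ‖w‖^2 < c₂ ∧ c₁ ≤ ‖w‖^2}
      = {w : E2 | ‖w‖^2 < c₂} \ {w : E2 | ‖w‖^2 < c₁} := by
    ext w; simp only [mem_setOf_eq, mem_diff, not_lt]
  have hsub : {w : E2 | ‖w‖^2 < c₁} ⊆ {w : E2 | ‖w‖^2 < c₂} :=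
    fun w hw => lt_of_lt_of_le hw h12
  have hm : MeasurableSet {w : E2 | ‖w‖^2 < c₁} := by
    have : Continuous fun w : E2 => ‖w‖^2 := by continuity
    exact measurableSet_lt this.measurable measurable_const
  have hfin : volume {w : E2 | ‖w‖^2 < c₁} ≠ ⊤ := by
    rw [vol_lt]
    exact ENNReal.mul_ne_top (measure_ball_lt_top).ne ENNReal.ofReal_ne_top
  rw [hset, measure_diff hsub hm.nullMeasurableSet hfin, vol_lt, vol_lt,
    ENNReal.ofReal_sub _ h1, ENNReal.mul_sub (fun _ _ => ββ_ne_top)]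

noncomputable def gg (s t : ℝ) : ℝ :=
  if 1 ≤ t^2 then 0
  else if t ≤ min s 0 then 1 - t^2
  else if t ≤ 0 then (1-s^2)/s^2 * t^2
  else if 1 ≤ s then 1 - t^2
  else if t < s then 1 - t^2/s^2
  else 0

def slc (s t : ℝ) : Set E2 := {w | t^2 + ‖w‖^2 < 1 ∧ t ≤ s * Real.sqrt (t^2 + ‖w‖^2)}

lemma cond_iff (s t Q : ℝ) (hQ : 0 ≤ Q) :
    t ≤ s * Real.sqrt Q ↔
      (if t ≤ 0 then (0 ≤ s ∨ s^2*Q ≤ t^2) else (0 ≤ s ∧ t^2 ≤ s^2*Q)) := by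
  obtain ⟨r, hr, rfl⟩ : ∃ r : ℝ, 0 ≤ r ∧ r^2 = Q := ⟨Real.sqrt Q, Real.sqrt_nonneg Q, Real.sq_sqrt hQ⟩
  rw [Real.sqrt_sq hr]
  split_ifs with ht
  · constructor
    · intro h
      rcases le_or_gt 0 s with hs | hs
      · exact Or.inl hs
      · refine Or.inr ?_
        nlinarith [mul_nonneg (neg_nonneg.2 hs.le) hr]
    · rintro (hs | h)
      · exact ht.trans (mul_nonneg hs hr)
      · rcases le_or_gt 0 s with hs | hs
        · exact ht.trans (mul_nonneg hs hr)
        · nlinarith [mul_nonneg (neg_nonneg.2 hs.le) hr, sq_nonneg (t - s*r), sq_nonneg (t + s*r)]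
  · push_neg at ht
    constructor
    · intro h
      have hs : 0 ≤ s := by
        by_contra hs
        push_neg at hs
        nlinarith [mul_nonneg (neg_nonneg.2 hs.le) hr]
      exact ⟨hs, by nlinarith [mul_nonneg hs hr]⟩
    · rintro ⟨hs, h⟩
      nlinarith [mul_nonneg hs hr, sq_nonneg (t - s*r), sq_nonneg (t + s*r)]

lemma vol_slc (s t : ℝ) : volume (slc s t) = ββ * ENNReal.ofReal (gg s t) := by
  have key : ∀ w : E2, (w ∈ slc s t ↔ (t^2 + ‖w‖^2 < 1 ∧
      (if t ≤ 0 then (0 ≤ s ∨ s^2*(t^2+‖w‖^2) ≤ t^2) else (0 ≤ s ∧ t^2 ≤ s^2*(t^2+‖w‖^2))))) := by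
    intro w
    unfold slc
    rw [mem_setOf_eq, cond_iff s t _ (by positivity)]
  rcases le_or_gt 1 (t^2) with h1 | h1
  · have he : slc s t = ∅ := by
      apply eq_empty_iff_forall_notMem.2
      intro w hw
      have := hw.1
      nlinarith [sq_nonneg ‖w‖]
    rw [he, measure_empty, gg, if_pos h1, ENNReal.ofReal_zero, mul_zero]
  rw [gg, if_neg (not_le.2 h1)]
  rcases le_or_gt t (min s 0) with h2 | h2
  · -- full disc, t ≤ s and t ≤ 0
    have hts : t ≤ s := h2.trans (min_le_left _ _)
    have ht0 : t ≤ 0 := h2.trans (min_le_right _ _)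
    rw [if_pos h2]
    have hset : slc s t = {w : E2 | ‖w‖^2 < 1 - t^2} := by
      ext w
      rw [key w, if_pos ht0, mem_setOf_eq]
      constructor
      · rintro ⟨hw, -⟩; linarith
      · intro hw
        refine ⟨by linarith, ?_⟩
        rcases le_or_gt 0 s with hs | hs
        · exact Or.inl hs
        · refine Or.inr ?_
          have hst : s^2 ≤ t^2 := by nlinarith
          nlinarith [sq_nonneg s, sq_nonneg ‖w‖, mul_le_mul_of_nonneg_left hw.le (sq_nonneg s)]
    rw [hset, vol_lt]
  rw [if_neg (not_le.2 h2)]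
  rcases le_or_gt t 0 with ht0 | ht0
  · -- s < t ≤ 0, s < 0 : closed ball
    rw [if_pos ht0]
    have hs0 : s < 0 := by
      rcases le_or_gt s 0 with h | h
      · rcases h.eq_or_lt with rfl | h
        · exfalso; simp at h2; linarith
        · exact h
      · exfalso; rw [min_eq_right h.le] at h2; linarith
    have hst : s < t := by rwa [min_eq_left hs0.le] at h2
    have hs2 : (0:ℝ) < s^2 := by nlinarith
    have htt : t^2 < s^2 := by nlinarith
    have hset : slc s t = {w : E2 | ‖w‖^2 ≤ (1-s^2)/s^2 * t^2} := by
      ext w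
      rw [key w, if_pos ht0, mem_setOf_eq, div_mul_eq_mul_div, le_div_iff₀ hs2]
      constructor
      · rintro ⟨hw1, (hs | hw2)⟩
        · exact absurd hs (not_le.2 hs0)
        · nlinarith
      · intro hw
        constructor
        · nlinarith [sq_nonneg ‖w‖]
        · exact Or.inr (by nlinarith)
    rw [hset, vol_le]
  rw [if_neg (not_le.2 ht0)]
  rcases le_or_gt 1 s with hs1 | hs1
  · -- 0 < t, 1 ≤ s : full disc
    rw [if_pos hs1]
    have hset : slc s t = {w : E2 | ‖w‖^2 < 1 - t^2} := by
      ext w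
      rw [key w, if_neg (not_le.2 ht0), mem_setOf_eq]
      constructor
      · rintro ⟨hw, -⟩; linarith
      · intro hw
        have hs2' : 1 ≤ s^2 := by nlinarith
        refine ⟨by linarith, by linarith, ?_⟩
        nlinarith [sq_nonneg ‖w‖, mul_nonneg (sq_nonneg s) (sq_nonneg ‖w‖),
          mul_le_mul_of_nonneg_right hs2' (sq_nonneg t)]
    rw [hset, vol_lt]
  rw [if_neg (not_le.2 hs1)]
  rcases lt_or_ge t s with hts | hts
  · -- 0 < t < s < 1 : annulus
    rw [if_pos hts]
    have hs2 : (0:ℝ) < s^2 := pow_pos (ht0.trans hts) 2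
    have hc1 : (0:ℝ) ≤ (1-s^2)/s^2 * t^2 := by
      apply mul_nonneg (div_nonneg (by nlinarith) hs2.le) (sq_nonneg t)
    have hc12 : (1-s^2)/s^2 * t^2 ≤ 1 - t^2 := by
      rw [div_mul_eq_mul_div, div_le_iff₀ hs2]
      nlinarith
    have hset : slc s t = {w : E2 | ‖w‖^2 < 1 - t^2 ∧ (1-s^2)/s^2 * t^2 ≤ ‖w‖^2} := by
      ext w
      rw [key w, if_neg (not_le.2 ht0), mem_setOf_eq, div_mul_eq_mul_div, div_le_iff₀ hs2]
      constructor
      · rintro ⟨hw1, -, hw2⟩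
        exact ⟨by linarith, by nlinarith⟩
      · rintro ⟨hw1, hw2⟩
        exact ⟨by linarith, by linarith [ht0, hts, hs1], by nlinarith⟩
    rw [hset, vol_annulus hc1 hc12]
    congr 1
    have hs0' : s ≠ 0 := (ht0.trans hts).ne'
    field_simp
    ring
  · -- 0 < s ≤ t (or s ≤ 0 < t) : empty
    rw [if_neg (not_lt.2 hts)]
    have hset : slc s t = ∅ := by
      apply eq_empty_iff_forall_notMem.2
      intro w hw
      rw [key w, if_neg (not_le.2 ht0)] at hw
      obtain ⟨hw1, hs, hw2⟩ := hw
      rcases hs.eq_or_lt with rfl | hspos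
      · nlinarith
      · have hA : s^2*(t^2+‖w‖^2) < s^2*1 :=
          mul_lt_mul_of_pos_left (by linarith) (pow_pos hspos 2)
        have hB : s^2 ≤ t^2 := by nlinarith
        nlinarith
    rw [hset, measure_empty, ENNReal.ofReal_zero, mul_zero]

lemma gg_meas (s : ℝ) : Measurable (gg s) := by
  unfold gg
  apply Measurable.ite (measurableSet_le measurable_const ((measurable_id.pow_const 2)))
    measurable_const
  apply Measurable.ite (measurableSet_le measurable_id measurable_const)
  · exact measurable_const.sub (measurable_id.pow_const 2)
  apply Measurable.ite (measurableSet_le measurable_id measurable_const)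
  · exact (measurable_id.pow_const 2).const_mul _
  apply Measurable.ite (MeasurableSet.const _)
  · exact measurable_const.sub (measurable_id.pow_const 2)
  apply Measurable.ite (measurableSet_lt measurable_id measurable_const)
  · exact measurable_const.sub ((measurable_id.pow_const 2).div_const _)
  · exact measurable_const

lemma gg_nonneg {s : ℝ} (hs : -1 < s) (t : ℝ) : 0 ≤ gg s t := by
  unfold gg
  split_ifs with h1 h2 h3 h4 h5
  · exact le_rfl
  · nlinarith
  · -- min s 0 < t ≤ 0, so s < t ≤ 0 and -1 < s < 0
    push_neg at h2
    have hs0 : s < 0 := by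
      rcases le_or_gt 0 s with h | h
      · exfalso; rw [min_eq_right h] at h2; linarith
      · exact h
    have : s < t := by rwa [min_eq_left hs0.le] at h2
    have hs2 : (0:ℝ) < s^2 := by nlinarith
    apply mul_nonneg (div_nonneg (by nlinarith) hs2.le) (sq_nonneg t)
  · nlinarith
  · push_neg at h2 h3 h4
    have hs2 : (0:ℝ) < s^2 := by nlinarith
    have : t^2 ≤ s^2 := by nlinarith
    have : t^2/s^2 ≤ 1 := by rw [div_le_one hs2]; linarith
    linarith
  · exact le_rfl

lemma gg_le_one {s : ℝ} (hs : -1 < s) (t : ℝ) : gg s t ≤ 1 := by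
  unfold gg
  split_ifs with h1 h2 h3 h4 h5
  · norm_num
  · nlinarith
  · push_neg at h2
    have hs0 : s < 0 := by
      rcases le_or_gt 0 s with h | h
      · exfalso; rw [min_eq_right h] at h2; linarith
      · exact h
    have hst : s < t := by rwa [min_eq_left hs0.le] at h2
    push_neg at h1
    have hs2 : (0:ℝ) < s^2 := by nlinarith
    have ht2 : t^2 ≤ s^2 := by nlinarith
    have : (1-s^2)/s^2 * t^2 ≤ (1-s^2)/s^2 * s^2 := by
      apply mul_le_mul_of_nonneg_left ht2 (div_nonneg (by nlinarith) hs2.le)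
    rw [div_mul_cancel₀ _ hs2.ne'] at this
    nlinarith
  · nlinarith
  · have : (0:ℝ) ≤ t^2/s^2 := by positivity
    linarith
  · norm_num

lemma gg_intInt {s : ℝ} (hs : -1 < s) (a b : ℝ) : IntervalIntegrable (gg s) volume a b := by
  rw [intervalIntegrable_iff]
  apply Measure.integrableOn_of_bounded measure_Ioc_lt_top.ne
    (gg_meas s).aestronglyMeasurable
  · filter_upwards with t
    rw [Real.norm_eq_abs, abs_le]
    exact ⟨by linarith [gg_nonneg hs t], gg_le_one hs t⟩

lemma gg_integral {s : ℝ} (hs : -1 < s) :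
    ∫ t in Ioo (-1:ℝ) 1, gg s t = 2/3 + 2/3 * min s 1 := by
  have base : ∫ t in Ioo (-1:ℝ) 1, gg s t = ∫ t in (-1:ℝ)..1, gg s t := by
    rw [intervalIntegral.integral_of_le (by norm_num), integral_Ioc_eq_integral_Ioo]
  rw [base]
  rcases le_or_gt 1 s with hs1 | hs1
  · -- s ≥ 1 : gg = 1 - t^2 on Ι (-1) 1
    rw [min_eq_right hs1]
    have : ∫ t in (-1:ℝ)..1, gg s t = ∫ t in (-1:ℝ)..1, (1 - t^2) := by
      apply intervalIntegral.integral_congr_ae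
      apply ae_of_all
      intro t ht
      rw [uIoc_of_le (by norm_num : (-1:ℝ) ≤ 1)] at ht
      obtain ⟨ht1, ht2⟩ := ht
      unfold gg
      rcases le_or_gt 1 (t^2) with h | h
      · rw [if_pos h]
        nlinarith
      rw [if_neg (not_le.2 h)]
      rcases le_or_gt t (min s 0) with h2 | h2
      · rw [if_pos h2]
      rw [if_neg (not_le.2 h2)]
      rcases le_or_gt t 0 with h3 | h3
      · exfalso; rw [min_eq_right (by linarith : (0:ℝ) ≤ s)] at h2; linarith
      rw [if_neg (not_le.2 h3), if_pos hs1]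
    rw [this, intervalIntegral.integral_sub intervalIntegrable_const
      (intervalIntegral.intervalIntegrable_pow 2), integral_pow,
      intervalIntegral.integral_const]
    norm_num
  rcases le_or_gt 0 s with hs0 | hs0
  · -- 0 ≤ s < 1
    rw [min_eq_left hs1.le]
    have split : ∫ t in (-1:ℝ)..1, gg s t
        = (∫ t in (-1:ℝ)..0, gg s t) + (∫ t in (0:ℝ)..s, gg s t) + (∫ t in s..1, gg s t) := by
      rw [intervalIntegral.integral_add_adjacent_intervals (gg_intInt hs _ _) (gg_intInt hs _ _),
        intervalIntegral.integral_add_adjacent_intervals (gg_intInt hs _ _) (gg_intInt hs _ _)]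
    have e1 : ∫ t in (-1:ℝ)..0, gg s t = ∫ t in (-1:ℝ)..0, (1 - t^2) := by
      apply intervalIntegral.integral_congr_ae
      apply ae_of_all
      intro t ht
      rw [uIoc_of_le (by norm_num : (-1:ℝ) ≤ 0)] at ht
      obtain ⟨ht1, ht2⟩ := ht
      unfold gg
      rw [if_neg (by push_neg; nlinarith), if_pos (by rw [min_eq_right hs0]; exact ht2)]
    have e2 : ∫ t in (0:ℝ)..s, gg s t = ∫ t in (0:ℝ)..s, (1 - t^2/s^2) := by
      apply intervalIntegral.integral_congr_ae
      apply ae_of_all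
      intro t ht
      rw [uIoc_of_le hs0] at ht
      obtain ⟨ht1, ht2⟩ := ht
      unfold gg
      rw [if_neg (by push_neg; nlinarith), if_neg (by push_neg; rw [min_eq_right hs0]; linarith),
        if_neg (not_le.2 ht1), if_neg (not_le.2 hs1)]
      rcases lt_or_ge t s with h | h
      · rw [if_pos h]
      · rw [if_neg (not_lt.2 h)]
        have : t = s := le_antisymm ht2 h
        rw [this]
        rw [div_self (pow_ne_zero 2 (ne_of_gt (show (0:ℝ) < s by linarith)))]
        ring
    have e3 : ∫ t in s..1, gg s t = 0 := by
      have h0 : ∫ t in s..1, gg s t = ∫ t in s..1, (0:ℝ) := by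
        apply intervalIntegral.integral_congr_ae
        apply ae_of_all
        intro t ht
        rw [uIoc_of_le hs1.le] at ht
        obtain ⟨ht1, ht2⟩ := ht
        unfold gg
        rcases le_or_gt 1 (t^2) with h | h
        · rw [if_pos h]
        rw [if_neg (not_le.2 h), if_neg (by push_neg; rw [min_eq_right hs0]; linarith),
          if_neg (by push_neg; linarith), if_neg (not_le.2 hs1), if_neg (by push_neg; linarith)]
      rw [h0, intervalIntegral.integral_zero]
    rw [split, e1, e2, e3]
    rw [intervalIntegral.integral_sub intervalIntegrable_const
      (intervalIntegral.intervalIntegrable_pow 2), integral_pow,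
      intervalIntegral.integral_const]
    rw [intervalIntegral.integral_sub intervalIntegrable_const
      ((intervalIntegral.intervalIntegrable_pow 2).div_const _), intervalIntegral.integral_div,
      integral_pow, intervalIntegral.integral_const]
    rcases hs0.eq_or_lt with rfl | hspos
    · norm_num
    · field_simp
      ring
  · -- -1 < s < 0
    rw [min_eq_left hs1.le]
    have split : ∫ t in (-1:ℝ)..1, gg s t
        = (∫ t in (-1:ℝ)..s, gg s t) + (∫ t in s..(0:ℝ), gg s t) + (∫ t in (0:ℝ)..1, gg s t) := by
      rw [intervalIntegral.integral_add_adjacent_intervals (gg_intInt hs _ _) (gg_intInt hs _ _),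
        intervalIntegral.integral_add_adjacent_intervals (gg_intInt hs _ _) (gg_intInt hs _ _)]
    have e1 : ∫ t in (-1:ℝ)..s, gg s t = ∫ t in (-1:ℝ)..s, (1 - t^2) := by
      apply intervalIntegral.integral_congr_ae
      apply ae_of_all
      intro t ht
      rw [uIoc_of_le (by linarith : (-1:ℝ) ≤ s)] at ht
      obtain ⟨ht1, ht2⟩ := ht
      unfold gg
      rw [if_neg (by push_neg; nlinarith), if_pos (by rw [min_eq_left hs0.le]; exact ht2)]
    have e2 : ∫ t in s..(0:ℝ), gg s t = ∫ t in s..(0:ℝ), ((1-s^2)/s^2 * t^2) := by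
      apply intervalIntegral.integral_congr_ae
      apply ae_of_all
      intro t ht
      rw [uIoc_of_le (by linarith : s ≤ (0:ℝ))] at ht
      obtain ⟨ht1, ht2⟩ := ht
      unfold gg
      rw [if_neg (by push_neg; nlinarith), if_neg (by push_neg; rw [min_eq_left hs0.le]; linarith),
        if_pos ht2]
    have e3 : ∫ t in (0:ℝ)..1, gg s t = 0 := by
      have h0 : ∫ t in (0:ℝ)..1, gg s t = ∫ t in (0:ℝ)..1, (0:ℝ) := by
        apply intervalIntegral.integral_congr_ae
        apply ae_of_all
        intro t ht
        rw [uIoc_of_le (by norm_num : (0:ℝ) ≤ 1)] at ht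
        obtain ⟨ht1, ht2⟩ := ht
        unfold gg
        rcases le_or_gt 1 (t^2) with h | h
        · rw [if_pos h]
        rw [if_neg (not_le.2 h), if_neg (by push_neg; rw [min_eq_left hs0.le]; linarith),
          if_neg (by push_neg; linarith), if_neg (by push_neg; linarith),
          if_neg (by push_neg; linarith)]
      rw [h0, intervalIntegral.integral_zero]
    rw [split, e1, e2, e3]
    rw [intervalIntegral.integral_sub intervalIntegrable_const
      (intervalIntegral.intervalIntegrable_pow 2), integral_pow,
      intervalIntegral.integral_const]
    rw [intervalIntegral.integral_const_mul, integral_pow]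
    have hs2 : s^2 ≠ 0 := pow_ne_zero 2 (ne_of_lt hs0)
    have hs0' : s ≠ 0 := ne_of_lt hs0
    field_simp
    ring

lemma norm_sq_eucl {n : ℕ} (v : EuclideanSpace ℝ (Fin n)) : ‖v‖^2 = ∑ i, (v i)^2 := by
  rw [EuclideanSpace.norm_eq, Real.sq_sqrt (by positivity)]
  congr 1
  ext i
  rw [Real.norm_eq_abs, sq_abs]

noncomputable def ΦΦ : E3 ≃ᵐ ℝ × E2 :=
  ((MeasurableEquiv.toLp 2 (Fin 3 → ℝ)).symm.trans
    (MeasurableEquiv.piFinSuccAbove (fun _ : Fin 3 => ℝ) 0)).trans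
    ((MeasurableEquiv.refl ℝ).prodCongr (MeasurableEquiv.toLp 2 (Fin 2 → ℝ)))

lemma ΦΦ_mp : MeasurePreserving ΦΦ volume volume := by
  have h := (((MeasurePreserving.id (volume : Measure ℝ)).prod
      (EuclideanSpace.volume_preserving_symm_measurableEquiv_toLp (Fin 2)).symm).comp
      ((volume_preserving_piFinSuccAbove (fun _ : Fin 3 => ℝ) 0).comp
      (EuclideanSpace.volume_preserving_symm_measurableEquiv_toLp (Fin 3))))
  exact h

lemma ΦΦ_fst (y : E3) : (ΦΦ y).1 = y 0 := rfl

lemma ΦΦ_snd (y : E3) : ‖(ΦΦ y).2‖^2 = (y 1)^2 + (y 2)^2 := by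
  rw [norm_sq_eucl, Fin.sum_univ_two]
  have h1 : (ΦΦ y).2 0 = y 1 := rfl
  have h2 : (ΦΦ y).2 1 = y 2 := rfl
  rw [h1, h2]

def MM (s : ℝ) : Set (ℝ × E2) :=
  {q | q.1^2 + ‖q.2‖^2 < 1 ∧ q.1 ≤ s * Real.sqrt (q.1^2 + ‖q.2‖^2)}

lemma MM_meas (s : ℝ) : MeasurableSet (MM s) := by
  have hc : Continuous fun q : ℝ × E2 => q.1^2 + ‖q.2‖^2 := by continuity
  apply MeasurableSet.inter
  · exact measurableSet_lt hc.measurable measurable_const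
  · exact measurableSet_le continuous_fst.measurable
      (continuous_const.mul hc.sqrt).measurable

lemma cone_preimage (s : ℝ) :
    {y : E3 | ‖y‖ < 1 ∧ y 0 ≤ s * ‖y‖} = ΦΦ ⁻¹' (MM s) := by
  ext y
  have hsum : (y 0)^2 + ‖(ΦΦ y).2‖^2 = ‖y‖^2 := by
    rw [ΦΦ_snd, norm_sq_eucl, Fin.sum_univ_three]; ring
  simp only [mem_setOf_eq, mem_preimage, MM, ΦΦ_fst]
  rw [hsum, Real.sqrt_sq (norm_nonneg y),
    pow_lt_one_iff_of_nonneg (norm_nonneg y) two_ne_zero]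

lemma cone_vol {s : ℝ} (hs : -1 < s) :
    volume {y : E3 | ‖y‖ < 1 ∧ y 0 ≤ s * ‖y‖}
      = ββ * ENNReal.ofReal (2/3 + 2/3 * min s 1) := by
  rw [cone_preimage s, ΦΦ_mp.measure_preimage (MM_meas s).nullMeasurableSet]
  rw [show (volume : Measure (ℝ × E2)) = (volume : Measure ℝ).prod volume from rfl]
  rw [Measure.prod_apply (MM_meas s)]
  have hslice : ∀ t : ℝ, (Prod.mk t ⁻¹' (MM s)) = slc s t := fun t => rfl
  simp only [hslice, vol_slc]
  rw [lintegral_const_mul _ (by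
    exact ENNReal.measurable_ofReal.comp (gg_meas s))]
  congr 1
  have hind : ∫⁻ t, ENNReal.ofReal (gg s t)
      = ∫⁻ t, (Ioo (-1:ℝ) 1).indicator (fun t => ENNReal.ofReal (gg s t)) t := by
    apply lintegral_congr
    intro t
    by_cases ht : t ∈ Ioo (-1:ℝ) 1
    · rw [indicator_of_mem ht]
    · rw [indicator_of_notMem ht]
      have : gg s t = 0 := by
        unfold gg
        rw [if_pos]
        simp only [mem_Ioo, not_and_or, not_lt] at ht
        rcases ht with h | h
        · nlinarith
        · nlinarith
      rw [this, ENNReal.ofReal_zero]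
  rw [hind, lintegral_indicator measurableSet_Ioo _,
    ← ofReal_integral_eq_lintegral_ofReal
      (((gg_intInt hs (-1) 1).1).mono_set Ioo_subset_Ioc_self)
      (ae_restrict_of_ae (ae_of_all _ (gg_nonneg hs))),
    gg_integral hs]

noncomputable def ee : E3 := EuclideanSpace.single 0 1

lemma ee_norm : ‖ee‖ = 1 := by
  rw [ee, EuclideanSpace.norm_single, norm_one]

lemma cone_vol_neg {s : ℝ} (hs : s ≤ -1) :
    volume {y : E3 | ‖y‖ < 1 ∧ y 0 ≤ s * ‖y‖} = 0 := by
  apply measure_mono_null (t := (Submodule.span ℝ {ee} : Submodule ℝ E3))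
  · intro y hy
    obtain ⟨h1, h2⟩ := hy
    have hy0 : (y 0)^2 ≤ ‖y‖^2 := by
      rw [show ‖y‖^2 = ∑ i, (y i)^2 by
        rw [EuclideanSpace.norm_eq, Real.sq_sqrt (by positivity)]
        congr 1; ext i; rw [Real.norm_eq_abs, sq_abs]]
      apply Finset.single_le_sum (f := fun i => (y i)^2) (fun i _ => sq_nonneg _) (Finset.mem_univ 0)
    have habs : -(‖y‖) ≤ y 0 := by nlinarith [norm_nonneg y]
    have hle : y 0 ≤ -‖y‖ := by nlinarith [norm_nonneg y]
    have heq : y 0 = -‖y‖ := le_antisymm hle habs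
    have hsum : (y 1)^2 + (y 2)^2 = 0 := by
      have : ‖y‖^2 = (y 0)^2 + ((y 1)^2 + (y 2)^2) := by
        rw [show ‖y‖^2 = ∑ i, (y i)^2 by
          rw [EuclideanSpace.norm_eq, Real.sq_sqrt (by positivity)]
          congr 1; ext i; rw [Real.norm_eq_abs, sq_abs]]
        rw [Fin.sum_univ_three]; ring
      nlinarith
    have hy1 : y 1 = 0 := by nlinarith [sq_nonneg (y 1), sq_nonneg (y 2)]
    have hy2 : y 2 = 0 := by nlinarith [sq_nonneg (y 1), sq_nonneg (y 2)]
    rw [SetLike.mem_coe, Submodule.mem_span_singleton]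
    refine ⟨y 0, ?_⟩
    ext i
    have : ((y 0) • ee) i = y 0 * (if i = 0 then 1 else 0) := by
      rw [ee]
      rcases eq_or_ne i 0 with rfl | hi
      · simp [EuclideanSpace.single_apply]
      · simp [EuclideanSpace.single_apply, hi]
    rw [this]
    fin_cases i
    · simp
    · simpa using hy1.symm
    · simpa using hy2.symm
  · apply Measure.addHaar_submodule
    intro h
    have h1 : Module.finrank ℝ (Submodule.span ℝ ({ee} : Set E3)) = 1 :=
      finrank_span_singleton (by
        intro h0
        have := congrArg (fun v : E3 => v 0) h0
        simp [ee, EuclideanSpace.single_apply] at this)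
    rw [h] at h1
    rw [finrank_top] at h1
    rw [finrank_euclideanSpace_fin] at h1
    norm_num at h1

lemma smul_lev (x : E3) (s : ℝ) :
    (Ioo (0:ℝ) 1 • (Subtype.val '' {z : sphere (0:E3) 1 | ⟪x, (z:E3)⟫ ≤ s}))
      = {y : E3 | ‖y‖ < 1 ∧ 0 < ‖y‖ ∧ ⟪x, y⟫ ≤ s * ‖y‖} := by
  ext y
  constructor
  · intro hy
    rw [Set.mem_smul] at hy
    obtain ⟨r, hr, v, hv, rfl⟩ := hy
    obtain ⟨z, hz, rfl⟩ := hv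
    obtain ⟨hr0, hr1⟩ := hr
    have hz1 : ‖(z:E3)‖ = 1 := mem_sphere_zero_iff_norm.1 z.2
    have hn : ‖r • (z:E3)‖ = r := by
      rw [norm_smul, hz1, Real.norm_eq_abs, abs_of_pos hr0, mul_one]
    refine ⟨by rw [hn]; exact hr1, by rw [hn]; exact hr0, ?_⟩
    rw [real_inner_smul_right, hn, mul_comm s r]
    exact mul_le_mul_of_nonneg_left hz hr0.le
  · rintro ⟨h1, h2, h3⟩
    rw [Set.mem_smul]
    have hy0 : ‖y‖ ≠ 0 := ne_of_gt h2
    have hzs : ‖(‖y‖⁻¹ • y : E3)‖ = 1 := by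
      rw [norm_smul, Real.norm_eq_abs, abs_of_pos (inv_pos.2 h2), inv_mul_cancel₀ hy0]
    refine ⟨‖y‖, ⟨h2, h1⟩, ‖y‖⁻¹ • y, ?_, smul_inv_smul₀ hy0 y⟩
    refine ⟨⟨‖y‖⁻¹ • y, mem_sphere_zero_iff_norm.2 hzs⟩, ?_, rfl⟩
    rw [mem_setOf_eq]
    show ⟪x, ‖y‖⁻¹ • y⟫ ≤ s
    rw [real_inner_smul_right]
    rw [inv_mul_le_iff₀ h2, mul_comm]
    exact h3

lemma lev_meas (x : E3) (s : ℝ) :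
    MeasurableSet {z : sphere (0:E3) 1 | ⟪x, (z:E3)⟫ ≤ s} := by
  apply measurableSet_le _ measurable_const
  exact (Continuous.inner continuous_const continuous_subtype_val).measurable

lemma toSphere_lev (x : E3) (s : ℝ) :
    (volume : Measure E3).toSphere {z : sphere (0:E3) 1 | ⟪x, (z:E3)⟫ ≤ s}
      = 3 * volume {y : E3 | ‖y‖ < 1 ∧ 0 < ‖y‖ ∧ ⟪x, y⟫ ≤ s * ‖y‖} := by
  rw [Measure.toSphere_apply' _ (lev_meas x s), smul_lev]
  congr 1
  rw [finrank_euclideanSpace_fin]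
  norm_num

lemma vol_cone_inner {x : E3} (hx : ‖x‖ = 1) (s : ℝ) :
    volume {y : E3 | ‖y‖ < 1 ∧ 0 < ‖y‖ ∧ ⟪x, y⟫ ≤ s * ‖y‖}
      = ββ * ENNReal.ofReal (2/3 + 2/3 * max (-1) (min s 1)) := by
  have hA : {y : E3 | ‖y‖ < 1 ∧ ⟪x, y⟫ ≤ s * ‖y‖}
      = {y : E3 | ‖y‖ < 1 ∧ 0 < ‖y‖ ∧ ⟪x, y⟫ ≤ s * ‖y‖} ∪ {0} := by
    ext y
    simp only [mem_setOf_eq, mem_union, mem_singleton_iff]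
    constructor
    · rintro ⟨h1, h2⟩
      rcases eq_or_ne y 0 with rfl | hy
      · exact Or.inr rfl
      · exact Or.inl ⟨h1, norm_pos_iff.2 hy, h2⟩
    · rintro (⟨h1, _, h3⟩ | rfl)
      · exact ⟨h1, h3⟩
      · simp
  have hvol : volume {y : E3 | ‖y‖ < 1 ∧ 0 < ‖y‖ ∧ ⟪x, y⟫ ≤ s * ‖y‖}
      = volume {y : E3 | ‖y‖ < 1 ∧ ⟪x, y⟫ ≤ s * ‖y‖} := by
    rw [hA]
    refine le_antisymm (measure_mono subset_union_left) ?_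
    calc volume ({y : E3 | ‖y‖ < 1 ∧ 0 < ‖y‖ ∧ ⟪x, y⟫ ≤ s * ‖y‖} ∪ {0})
        ≤ volume {y : E3 | ‖y‖ < 1 ∧ 0 < ‖y‖ ∧ ⟪x, y⟫ ≤ s * ‖y‖} + volume ({0} : Set E3) :=
          measure_union_le _ _
      _ = volume {y : E3 | ‖y‖ < 1 ∧ 0 < ‖y‖ ∧ ⟪x, y⟫ ≤ s * ‖y‖} := by
          rw [measure_singleton, add_zero]
  rw [hvol]
  -- rotate x to ee
  set f := Submodule.reflection (ℝ ∙ (x - ee))ᗮ with hf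
  have hfx : f x = ee := Submodule.reflection_sub (by rw [hx, ee_norm])
  have hpre : {y : E3 | ‖y‖ < 1 ∧ ⟪x, y⟫ ≤ s * ‖y‖}
      = f ⁻¹' {y : E3 | ‖y‖ < 1 ∧ y 0 ≤ s * ‖y‖} := by
    ext y
    simp only [mem_setOf_eq, mem_preimage]
    have hn : ‖f y‖ = ‖y‖ := f.norm_map y
    have hc : (f y) 0 = ⟪x, y⟫ := by
      have h1 : (f y) 0 = ⟪ee, f y⟫ := by
        rw [ee, EuclideanSpace.inner_single_left]
        simp
      rw [h1, ← hfx, f.inner_map_map]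
    rw [hn, hc]
  rw [hpre]
  have hmeas : MeasurableSet {y : E3 | ‖y‖ < 1 ∧ y 0 ≤ s * ‖y‖} := by
    apply MeasurableSet.inter
    · exact measurableSet_lt continuous_norm.measurable measurable_const
    · refine measurableSet_le ?_ (continuous_norm.measurable.const_mul s)
      exact ((continuous_apply (0 : Fin 3)).comp (PiLp.continuous_ofLp 2 _)).measurable
  rw [f.measurePreserving.measure_preimage hmeas.nullMeasurableSet]
  rcases le_or_gt s (-1) with hs | hs
  · rw [cone_vol_neg hs, max_eq_left (by rw [min_eq_left (by linarith)]; exact hs)]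
    rw [show (2/3 + 2/3 * (-1) : ℝ) = 0 by ring, ENNReal.ofReal_zero, mul_zero]
  · rw [cone_vol hs, max_eq_right]
    rcases le_or_gt s 1 with h | h
    · rw [min_eq_left h]; linarith
    · rw [min_eq_right h.le]; norm_num


lemma toSphere_lev_val {x : E3} (hx : ‖x‖ = 1) (s : ℝ) :
    (volume : Measure E3).toSphere {z : sphere (0:E3) 1 | ⟪x, (z:E3)⟫ ≤ s}
      = ββ * ENNReal.ofReal (2 + 2 * max (-1) (min s 1)) := by
  rw [toSphere_lev x s, vol_cone_inner hx s, ← mul_assoc, mul_comm (3:ENNReal) ββ, mul_assoc]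
  congr 1
  rw [show (3:ENNReal) = ENNReal.ofReal (3:ℝ) by norm_num,
    ← ENNReal.ofReal_mul (by norm_num : (0:ℝ) ≤ 3)]
  congr 1
  ring



/-- The normalized rotation-invariant (Haar) probability measure `σ` on the unit
sphere `S^{n-1} ⊆ ℝⁿ`. -/
noncomputable def sphereHaar (n : ℕ) :
    Measure (sphere (0 : EuclideanSpace ℝ (Fin n)) 1) :=
  ((volume : Measure (EuclideanSpace ℝ (Fin n))).toSphere Set.univ)⁻¹ •
    (volume : Measure (EuclideanSpace ℝ (Fin n))).toSphere


lemma T_meas (x : E3) : Measurable (fun z : sphere (0:E3) 1 => ⟪x, (z:E3)⟫) :=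
  (Continuous.inner continuous_const continuous_subtype_val).measurable

lemma map_eq {x : E3} (hx : ‖x‖ = 1) :
    Measure.map (fun z : sphere (0:E3) 1 => ⟪x, (z:E3)⟫) (volume : Measure E3).toSphere
      = ((2:ENNReal) * ββ) • ((volume : Measure ℝ).restrict (Icc (-1:ℝ) 1)) := by
  haveI := Measure.isFiniteMeasure_map (volume : Measure E3).toSphere
    (fun z : sphere (0:E3) 1 => ⟪x, (z:E3)⟫)
  apply Measure.ext_of_Iic
  intro a
  rw [Measure.map_apply (T_meas x) measurableSet_Iic]
  have hpre : (fun z : sphere (0:E3) 1 => ⟪x, (z:E3)⟫) ⁻¹' (Iic a)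
      = {z : sphere (0:E3) 1 | ⟪x, (z:E3)⟫ ≤ a} := rfl
  rw [hpre, toSphere_lev_val hx a, Measure.smul_apply,
    Measure.restrict_apply measurableSet_Iic]
  have hset : Iic a ∩ Icc (-1:ℝ) 1 = Icc (-1) (min a 1) := by
    ext t
    simp only [mem_inter_iff, mem_Iic, mem_Icc, le_min_iff]
    tauto
  rw [hset, Real.volume_Icc]
  rcases le_or_gt (-1:ℝ) a with h | h
  · rw [max_eq_right (le_min h (by norm_num)), smul_eq_mul,
      show min a 1 - -1 = min a 1 + 1 by ring,
      show (2 + 2 * min a 1 : ℝ) = 2 * (min a 1 + 1) by ring,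
      ENNReal.ofReal_mul (by norm_num : (0:ℝ) ≤ 2),
      show ENNReal.ofReal (2:ℝ) = 2 by norm_num]
    ring
  · have hm : min a 1 = a := min_eq_left (by linarith)
    rw [max_eq_left (by rw [hm]; linarith), hm, smul_eq_mul,
      show (2 + 2*(-1:ℝ)) = 0 by ring, ENNReal.ofReal_zero, mul_zero,
      ENNReal.ofReal_eq_zero.2 (by linarith : a - -1 ≤ 0), mul_zero]

lemma ee3 : ‖(EuclideanSpace.single 0 1 : E3)‖ = 1 := by
  rw [EuclideanSpace.norm_single, norm_one]

lemma toSphere_univ : (volume : Measure E3).toSphere univ = 4 * ββ := by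
  have h := congrArg (fun μ : Measure ℝ => μ univ) (map_eq ee3)
  rw [Measure.map_apply (T_meas _) MeasurableSet.univ, preimage_univ] at h
  rw [h, Measure.smul_apply, Measure.restrict_apply MeasurableSet.univ, univ_inter,
    Real.volume_Icc, show (1 - -1 : ℝ) = 2 by ring, smul_eq_mul,
    show ENNReal.ofReal (2:ℝ) = 2 by norm_num]
  ring

lemma sphere_int {x : E3} (hx : ‖x‖ = 1) (G : ℝ → ℝ) (hG : Continuous G) :
    ∫ z : sphere (0:E3) 1, G (⟪x, (z:E3)⟫) ∂(sphereHaar 3)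
      = (1/2) * ∫ t in (-1:ℝ)..1, G t := by
  rw [sphereHaar, toSphere_univ, integral_smul_measure]
  have h1 : ∫ z : sphere (0:E3) 1, G (⟪x, (z:E3)⟫) ∂(volume : Measure E3).toSphere
      = ∫ t, G t ∂(Measure.map (fun z : sphere (0:E3) 1 => ⟪x, (z:E3)⟫)
          (volume : Measure E3).toSphere) :=
    (integral_map (T_meas x).aemeasurable hG.aestronglyMeasurable).symm
  rw [h1, map_eq hx, integral_smul_measure]
  have h2 : ∫ t in Icc (-1:ℝ) 1, G t = ∫ t in (-1:ℝ)..1, G t := by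
    rw [intervalIntegral.integral_of_le (by norm_num : (-1:ℝ) ≤ 1),
      integral_Icc_eq_integral_Ioc]
  rw [h2]
  have hb : ββ.toReal ≠ 0 := ENNReal.toReal_ne_zero.2 ⟨ββ_ne_zero, ββ_ne_top⟩
  rw [smul_eq_mul, smul_eq_mul, ← mul_assoc]
  congr 1
  rw [ENNReal.toReal_inv, ENNReal.toReal_mul, ENNReal.toReal_mul,
    ENNReal.toReal_ofNat, ENNReal.toReal_ofNat]
  field_simp
  ring

lemma integrand_eq {p a : ℝ} {x : E3} (hp : 0 < p) (hx : ‖x‖ = 1) (ha : 0 ≤ a)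
    (z : sphere (0:E3) 1) :
    ‖x - a • (z:E3)‖ ^ p = (1 + a^2 - 2*a*⟪x,(z:E3)⟫) ^ (p/2) := by
  have hz : ‖(z:E3)‖ = 1 := mem_sphere_zero_iff_norm.1 z.2
  have hsq : ‖x - a • (z:E3)‖^2 = 1 + a^2 - 2*a*⟪x,(z:E3)⟫ := by
    rw [norm_sub_sq_real, real_inner_smul_right, norm_smul, hx, hz]
    rw [Real.norm_eq_abs, abs_of_nonneg ha]
    ring
  rw [← hsq, ← Real.rpow_natCast ‖x - a • (z:E3)‖ 2, ← Real.rpow_mul (norm_nonneg _),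
    show ((2:ℕ):ℝ)*(p/2) = p by push_cast; ring]

lemma J_eq {p a : ℝ} (hp : 0 < p) (ha : 0 < a) :
    ∫ t in (-1:ℝ)..1, (1 + a^2 - 2*a*t) ^ (p/2)
      = ((1+a) ^ (p+2) - |1-a| ^ (p+2)) / (a*(p+2)) := by
  set q : ℝ := p/2 + 1 with hq
  have hq1 : 1 ≤ q := by rw [hq]; linarith
  have hderiv : ∀ t ∈ uIcc (-1:ℝ) 1,
      HasDerivAt (fun t => -(1 + a^2 - 2*a*t) ^ q / (2*a*q))
        ((1 + a^2 - 2*a*t) ^ (p/2)) t := by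
    intro t ht
    have hc : HasDerivAt (fun t : ℝ => 1 + a^2 - 2*a*t) (-(2*a)) t := by
      simpa using ((hasDerivAt_id t).const_mul (2*a)).const_sub (1 + a^2)
    have hr := HasDerivAt.rpow_const hc (Or.inr hq1)
    have := (hr.neg).div_const (2*a*q)
    convert! this using 1
    have hq0 : q ≠ 0 := by rw [hq]; positivity
    rw [show q - 1 = p/2 by rw [hq]; ring]
    field_simp
  have hcont : Continuous fun t : ℝ => (1 + a^2 - 2*a*t) ^ (p/2) := by
    apply Continuous.rpow_const
    · continuity
    · intro t; exact Or.inr (by positivity)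
  rw [intervalIntegral.integral_eq_sub_of_hasDerivAt hderiv
    (hcont.intervalIntegrable _ _)]
  have e1 : (1 + a^2 - 2*a*1) = |1-a|^(2:ℕ) := by rw [sq_abs]; ring
  have e2 : (1 + a^2 - 2*a*(-1)) = (1+a)^(2:ℕ) := by ring
  rw [e1, e2, ← Real.rpow_natCast |1-a| 2, ← Real.rpow_natCast (1+a) 2,
    ← Real.rpow_mul (abs_nonneg _), ← Real.rpow_mul (by linarith : (0:ℝ) ≤ 1+a)]
  rw [show (2:ℕ) * q = p + 2 by push_cast; rw [hq]; ring]
  field_simp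
  ring

-- midpoint convexity for rpow with nonpositive exponent
lemma mid {u v c : ℝ} (hu : 0 < u) (hv : 0 < v) (hc : c ≤ 0) :
    2 * (((u+v)/2) ^ c) ≤ u ^ c + v ^ c := by
  have huv : 0 < u * v := mul_pos hu hv
  have hsq : Real.sqrt (u*v) ≤ (u+v)/2 := by
    rw [show (u+v)/2 = Real.sqrt (((u+v)/2)^2) from (Real.sqrt_sq (by positivity)).symm]
    apply Real.sqrt_le_sqrt
    nlinarith [sq_nonneg (u-v)]
  have h2 : ((u+v)/2) ^ c ≤ (Real.sqrt (u*v)) ^ c :=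
    Real.rpow_le_rpow_of_nonpos (Real.sqrt_pos.2 huv) hsq hc
  have h3 : (Real.sqrt (u*v)) ^ c = Real.sqrt (u^c * v^c) := by
    rw [← Real.mul_rpow hu.le hv.le, Real.sqrt_eq_rpow, Real.sqrt_eq_rpow,
      ← Real.rpow_mul huv.le, ← Real.rpow_mul huv.le]
    ring_nf
  have h4 : 2 * Real.sqrt (u^c * v^c) ≤ u^c + v^c := by
    have hA : 0 ≤ u^c := (Real.rpow_pos_of_pos hu c).le
    have hB : 0 ≤ v^c := (Real.rpow_pos_of_pos hv c).le
    rw [Real.sqrt_mul hA]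
    nlinarith [sq_nonneg (Real.sqrt (u^c) - Real.sqrt (v^c)), Real.sq_sqrt hA, Real.sq_sqrt hB,
      Real.sqrt_nonneg (u^c), Real.sqrt_nonneg (v^c)]
  calc 2 * (((u+v)/2) ^ c) ≤ 2 * (Real.sqrt (u*v)) ^ c := by linarith
    _ = 2 * Real.sqrt (u^c * v^c) := by rw [h3]
    _ ≤ u^c + v^c := h4

lemma exp_le_one_add {x : ℝ} (h0 : 0 ≤ x) (h1 : x ≤ 1) :
    Real.exp (Real.log 2 * x) ≤ 1 + x := by
  have hconv := convexOn_exp.2 (mem_univ (0:ℝ)) (mem_univ (Real.log 2))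
    (by linarith : (0:ℝ) ≤ 1 - x) h0 (by ring)
  simp only [smul_eq_mul, mul_zero, zero_add, Real.exp_zero, mul_one] at hconv
  calc Real.exp (Real.log 2 * x) = Real.exp ((1-x) * 0 + x * Real.log 2) := by ring_nf
    _ ≤ (1-x) * 1 + x * Real.exp (Real.log 2) := by
        simpa using hconv
    _ = 1 + x := by rw [Real.exp_log (by norm_num : (0:ℝ) < 2)]; ring

lemma log2_sq : (Real.log 2)^2 < 1/2 := by
  nlinarith [Real.log_two_lt_d9, Real.log_nonneg (by norm_num : (1:ℝ) ≤ 2)]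

lemma psi_nonneg {p : ℝ} (h0 : 0 ≤ p) (h1 : p ≤ 1) :
    0 ≤ 2 * Real.exp (Real.log 2 * p) - p^2 - p - 2 := by
  set F : ℝ → ℝ := fun x => 2 * Real.exp (Real.log 2 * x) - x^2 - x - 2 with hF
  have hder : ∀ x : ℝ, HasDerivAt F (2 * Real.log 2 * Real.exp (Real.log 2 * x) - 2*x - 1) x := by
    intro x
    have h1 : HasDerivAt (fun x : ℝ => Real.log 2 * x) (Real.log 2) x := by
      simpa using (hasDerivAt_id x).const_mul (Real.log 2)
    have h2 := (h1.exp.const_mul 2)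
    have h3 : HasDerivAt (fun x : ℝ => x^2 + x + 2) (2*x + 1) x := by
      simpa using (((hasDerivAt_pow 2 x).add (hasDerivAt_id x)).add_const 2)
    have := h2.sub h3
    convert! this using 1
    · funext y; rw [hF]; simp only [Pi.sub_apply]; ring
    · ring
  have hderiv : deriv F = fun x => 2 * Real.log 2 * Real.exp (Real.log 2 * x) - 2*x - 1 :=
    funext fun x => (hder x).deriv
  have hder2 : ∀ x : ℝ, HasDerivAt (deriv F)
      (2 * (Real.log 2)^2 * Real.exp (Real.log 2 * x) - 2) x := by
    intro x
    rw [hderiv]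
    have h1 : HasDerivAt (fun x : ℝ => Real.log 2 * x) (Real.log 2) x := by
      simpa using (hasDerivAt_id x).const_mul (Real.log 2)
    have h2 := (h1.exp.const_mul (2 * Real.log 2))
    have h3 : HasDerivAt (fun x : ℝ => 2*x + 1) (2:ℝ) x := by
      simpa using ((hasDerivAt_id x).const_mul (2:ℝ)).add_const 1
    have := h2.sub h3
    convert! this using 1
    · funext y; simp only [Pi.sub_apply]; ring
    · ring
  have hconc : ConcaveOn ℝ (Icc (0:ℝ) 1) F := by
    apply concaveOn_of_deriv2_nonpos' (convex_Icc 0 1)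
    · intro x _; exact (hder x).differentiableAt.differentiableWithinAt
    · intro x _; exact (hder2 x).differentiableAt.differentiableWithinAt
    · intro x hx
      have : deriv^[2] F x = deriv (deriv F) x := rfl
      rw [this, (hder2 x).deriv]
      have hexp : Real.exp (Real.log 2 * x) ≤ 1 + x := exp_le_one_add hx.1 hx.2
      nlinarith [log2_sq, Real.exp_pos (Real.log 2 * x), sq_nonneg (Real.log 2),
        mul_le_mul_of_nonneg_left hexp (by positivity : (0:ℝ) ≤ 2 * (Real.log 2)^2),
        mul_nonneg (sq_nonneg (Real.log 2)) (by linarith [hx.2] : (0:ℝ) ≤ 1 - x)]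
  have hF0 : F 0 = 0 := by simp [hF]
  have hF1 : F 1 = 0 := by
    simp only [hF, mul_one]
    rw [Real.exp_log (by norm_num : (0:ℝ) < 2)]
    ring
  have := hconc.2 (left_mem_Icc.2 (by norm_num)) (right_mem_Icc.2 (by norm_num))
    (by linarith : (0:ℝ) ≤ 1 - p) h0 (by ring)
  simp only [smul_eq_mul, hF0, hF1, mul_zero, add_zero, mul_one, smul_zero, zero_add] at this
  calc (0:ℝ) = (1-p) * F 0 + p * F 1 := by rw [hF0, hF1]; ring
    _ ≤ F ((1-p) * 0 + p * 1) := hconc.2 (left_mem_Icc.2 (by norm_num))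
        (right_mem_Icc.2 (by norm_num)) (by linarith) h0 (by ring)
    _ = F p := by norm_num
    _ = 2 * Real.exp (Real.log 2 * p) - p^2 - p - 2 := rfl

lemma phi_nonneg {p : ℝ} (h0 : 0 ≤ p) (h1 : p ≤ 1) :
    0 ≤ 4 * Real.exp (Real.log 2 * p) - 2*p - 4 - (p^3 + 3*p^2 + 2*p)/3 := by
  set F : ℝ → ℝ := fun x => 4 * Real.exp (Real.log 2 * x) - 2*x - 4 - (x^3 + 3*x^2 + 2*x)/3
    with hF
  have hder : ∀ x : ℝ, HasDerivAt F
      (4 * Real.log 2 * Real.exp (Real.log 2 * x) - 2 - (3*x^2 + 6*x + 2)/3) x := by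
    intro x
    have h1 : HasDerivAt (fun x : ℝ => Real.log 2 * x) (Real.log 2) x := by
      simpa using (hasDerivAt_id x).const_mul (Real.log 2)
    have h2 := h1.exp.const_mul 4
    have h3 : HasDerivAt (fun x : ℝ => 2*x + 4 + (x^3 + 3*x^2 + 2*x)/3)
        (2 + (3*x^2 + 6*x + 2)/3) x := by
      have ha : HasDerivAt (fun x : ℝ => x^3 + 3*x^2 + 2*x) (3*x^2 + 6*x + 2) x := by
        have := ((hasDerivAt_pow 3 x).add (((hasDerivAt_pow 2 x).const_mul 3))).add
          ((hasDerivAt_id x).const_mul 2)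
        convert! this using 1
        push_cast
        ring
      have := (((hasDerivAt_id x).const_mul (2:ℝ)).add_const (4:ℝ)).add (ha.div_const 3)
      convert! this using 1
      simp
    have := h2.sub h3
    convert! this using 1
    · funext y; rw [hF]; simp only [Pi.sub_apply]; ring
    · ring
  have hderiv : deriv F = fun x => 4 * Real.log 2 * Real.exp (Real.log 2 * x)
      - 2 - (3*x^2 + 6*x + 2)/3 := funext fun x => (hder x).deriv
  have hder2 : ∀ x : ℝ, HasDerivAt (deriv F)
      (4 * (Real.log 2)^2 * Real.exp (Real.log 2 * x) - (6*x + 6)/3) x := by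
    intro x
    rw [hderiv]
    have h1 : HasDerivAt (fun x : ℝ => Real.log 2 * x) (Real.log 2) x := by
      simpa using (hasDerivAt_id x).const_mul (Real.log 2)
    have h2 := h1.exp.const_mul (4 * Real.log 2)
    have h3 : HasDerivAt (fun x : ℝ => 2 + (3*x^2 + 6*x + 2)/3) ((6*x + 6)/3) x := by
      have ha : HasDerivAt (fun x : ℝ => 3*x^2 + 6*x + 2) (6*x + 6) x := by
        have := (((hasDerivAt_pow 2 x).const_mul 3).add ((hasDerivAt_id x).const_mul 6)).add_const 2
        convert! this using 1
        push_cast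
        ring
      have := (hasDerivAt_const x (2:ℝ)).add (ha.div_const 3)
      convert! this using 1
      simp
    have := h2.sub h3
    convert! this using 1
    · funext y; simp only [Pi.sub_apply]; ring
    · ring
  have hconc : ConcaveOn ℝ (Icc (0:ℝ) 1) F := by
    apply concaveOn_of_deriv2_nonpos' (convex_Icc 0 1)
    · intro x _; exact (hder x).differentiableAt.differentiableWithinAt
    · intro x _; exact (hder2 x).differentiableAt.differentiableWithinAt
    · intro x hx
      have : deriv^[2] F x = deriv (deriv F) x := rfl
      rw [this, (hder2 x).deriv]
      have hexp : Real.exp (Real.log 2 * x) ≤ 1 + x := exp_le_one_add hx.1 hx.2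
      nlinarith [log2_sq, Real.exp_pos (Real.log 2 * x), sq_nonneg (Real.log 2),
        mul_le_mul_of_nonneg_left hexp (by positivity : (0:ℝ) ≤ 4 * (Real.log 2)^2),
        mul_nonneg (sq_nonneg (Real.log 2)) (by linarith [hx.2] : (0:ℝ) ≤ 1 - x)]
  have hF0 : F 0 = 0 := by simp [hF]
  have hF1 : F 1 = 0 := by
    simp only [hF, mul_one]
    rw [Real.exp_log (by norm_num : (0:ℝ) < 2)]
    ring
  calc (0:ℝ) = (1-p) * F 0 + p * F 1 := by rw [hF0, hF1]; ring
    _ ≤ F ((1-p) * 0 + p * 1) := hconc.2 (left_mem_Icc.2 (by norm_num))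
        (right_mem_Icc.2 (by norm_num)) (by linarith) h0 (by ring)
    _ = F p := by norm_num
    _ = 4 * Real.exp (Real.log 2 * p) - 2*p - 4 - (p^3 + 3*p^2 + 2*p)/3 := rfl

lemma hd_plus (r A : ℝ) (h : 1 + A ≠ 0) :
    HasDerivAt (fun A : ℝ => (1+A)^r) (r*(1+A)^(r-1)) A := by
  have hbase : HasDerivAt (fun A : ℝ => 1 + A) 1 A := (hasDerivAt_id A).const_add 1
  simpa using hbase.rpow_const (p := r) (Or.inl h)

lemma hd_minus (r A : ℝ) (h : 1 - A ≠ 0) :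
    HasDerivAt (fun A : ℝ => (1-A)^r) (-(r*(1-A)^(r-1))) A := by
  have hbase : HasDerivAt (fun A : ℝ => 1 - A) (-1) A := (hasDerivAt_id A).const_sub 1
  have h2 := hbase.rpow_const (p := r) (Or.inl h)
  convert h2 using 1
  ring

lemma hd_sub1 (r A : ℝ) (h : A - 1 ≠ 0) :
    HasDerivAt (fun A : ℝ => (A-1)^r) (r*(A-1)^(r-1)) A := by
  have hbase : HasDerivAt (fun A : ℝ => A - 1) 1 A := (hasDerivAt_id A).sub_const 1
  simpa using hbase.rpow_const (p := r) (Or.inl h)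

lemma c_plus (r : ℝ) (hr : 0 ≤ r) : Continuous fun A : ℝ => (1+A)^r :=
  Continuous.rpow_const (by continuity) (fun _ => Or.inr hr)

lemma c_minus (r : ℝ) (hr : 0 ≤ r) : Continuous fun A : ℝ => (1-A)^r :=
  Continuous.rpow_const (by continuity) (fun _ => Or.inr hr)

lemma c_sub1 (r : ℝ) (hr : 0 ≤ r) : Continuous fun A : ℝ => (A-1)^r :=
  Continuous.rpow_const (by continuity) (fun _ => Or.inr hr)

lemma c_id (r : ℝ) (hr : 0 ≤ r) : Continuous fun A : ℝ => A^r :=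
  Continuous.rpow_const continuous_id (fun _ => Or.inr hr)

lemma ineq1 {p a : ℝ} (hp : 0 < p) (hp1 : p ≤ 1) (ha : 0 < a) (ha1 : a ≤ 1) :
    2*(p+2)*a + (p+2)*(p+1)*p/3 * a^3 ≤ (1+a)^(p+2) - (1-a)^(p+2) := by
  set g2 : ℝ → ℝ := fun A => (p+2)*(p+1)*((1+A)^p - (1-A)^p) - (2*(p+2)*(p+1)*p)*A with hg2def
  set g1 : ℝ → ℝ := fun A =>
    (p+2)*((1+A)^(p+1) + (1-A)^(p+1)) - 2*(p+2) - ((p+2)*(p+1)*p)*A^2 with hg1def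
  set g0 : ℝ → ℝ := fun A =>
    (1+A)^(p+2) - (1-A)^(p+2) - (2*(p+2))*A - ((p+2)*(p+1)*p/3)*A^3 with hg0def
  have hIoo : ∀ A ∈ Ioo (0:ℝ) 1, (1 + A ≠ 0 ∧ 1 - A ≠ 0) := by
    rintro A ⟨h1, h2⟩
    constructor <;> intro h <;> nlinarith
  have hg2der : ∀ A ∈ Ioo (0:ℝ) 1, HasDerivAt g2
      ((p+2)*(p+1)*(p*(1+A)^(p-1) + p*(1-A)^(p-1)) - 2*(p+2)*(p+1)*p) A := by
    intro A hA
    obtain ⟨hA1, hA2⟩ := hIoo A hA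
    have h1 := (((hd_plus p A hA1).sub (hd_minus p A hA2)).const_mul ((p+2)*(p+1))).sub
      (((hasDerivAt_id A).const_mul (2*(p+2)*(p+1)*p)))
    convert! h1 using 1
    all_goals first
      | (funext B; simp only [hg2def, id_eq, Pi.sub_apply, Pi.add_apply]; push_cast; ring)
      | (simp only [hg2def, id_eq]; push_cast; ring)
      | (push_cast; ring)
  have hg2mono : MonotoneOn g2 (Icc (0:ℝ) 1) := by
    apply monotoneOn_of_deriv_nonneg (convex_Icc 0 1)
    · apply Continuous.continuousOn
      rw [hg2def]
      exact (continuous_const.mul ((c_plus p hp.le).sub (c_minus p hp.le))).sub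
        (continuous_const.mul continuous_id)
    · rw [interior_Icc]
      intro A hA
      exact (hg2der A hA).differentiableAt.differentiableWithinAt
    · rw [interior_Icc]
      intro A hA
      rw [(hg2der A hA).deriv]
      obtain ⟨hA1, hA2⟩ := hA
      have hmid := mid (u := 1+A) (v := 1-A) (c := p-1)
        (by linarith) (by linarith) (by linarith)
      rw [show (1+A+(1-A))/2 = 1 by ring, Real.one_rpow] at hmid
      nlinarith [mul_nonneg (le_of_lt (mul_pos (mul_pos (show (0:ℝ) < p+2 by linarith)
        (show (0:ℝ) < p+1 by linarith)) hp))
        (by linarith : (0:ℝ) ≤ (1+A)^(p-1) + (1-A)^(p-1) - 2)]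
  have hg2nonneg : ∀ A ∈ Icc (0:ℝ) 1, 0 ≤ g2 A := by
    intro A hA
    have h0 : g2 0 = 0 := by rw [hg2def]; simp [Real.one_rpow]
    rw [← h0]
    exact hg2mono (left_mem_Icc.2 zero_le_one) hA hA.1
  have hg1der : ∀ A ∈ Ioo (0:ℝ) 1, HasDerivAt g1 (g2 A) A := by
    intro A hA
    obtain ⟨hA1, hA2⟩ := hIoo A hA
    have h1 := ((((hd_plus (p+1) A hA1).add (hd_minus (p+1) A hA2)).const_mul (p+2)).sub_const
      (2*(p+2))).sub ((hasDerivAt_pow 2 A).const_mul ((p+2)*(p+1)*p))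
    rw [show p+1-1 = p by ring] at h1
    convert! h1 using 1
    all_goals first
      | (funext B; simp only [hg1def, id_eq, Pi.sub_apply, Pi.add_apply]; push_cast; ring)
      | (simp only [hg2def, id_eq]; push_cast; ring)
      | (push_cast; ring)
  have hg1mono : MonotoneOn g1 (Icc (0:ℝ) 1) := by
    apply monotoneOn_of_deriv_nonneg (convex_Icc 0 1)
    · apply Continuous.continuousOn
      rw [hg1def]
      exact ((continuous_const.mul ((c_plus (p+1) (by linarith)).add
        (c_minus (p+1) (by linarith)))).sub continuous_const).sub
        (continuous_const.mul (continuous_pow 2))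
    · rw [interior_Icc]; intro A hA
      exact (hg1der A hA).differentiableAt.differentiableWithinAt
    · rw [interior_Icc]; intro A hA
      rw [(hg1der A hA).deriv]
      exact hg2nonneg A ⟨hA.1.le, hA.2.le⟩
  have hg1nonneg : ∀ A ∈ Icc (0:ℝ) 1, 0 ≤ g1 A := by
    intro A hA
    have h0 : g1 0 = 0 := by rw [hg1def]; simp [Real.one_rpow]; ring
    rw [← h0]
    exact hg1mono (left_mem_Icc.2 zero_le_one) hA hA.1
  have hg0der : ∀ A ∈ Ioo (0:ℝ) 1, HasDerivAt g0 (g1 A) A := by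
    intro A hA
    obtain ⟨hA1, hA2⟩ := hIoo A hA
    have h1 := (((hd_plus (p+2) A hA1).sub (hd_minus (p+2) A hA2)).sub
      (((hasDerivAt_id A).const_mul (2*(p+2))))).sub
      (((hasDerivAt_pow 3 A).const_mul ((p+2)*(p+1)*p/3)))
    rw [show p+2-1 = p+1 by ring] at h1
    convert! h1 using 1
    all_goals first
      | (funext B; simp only [hg0def, id_eq, Pi.sub_apply, Pi.add_apply]; push_cast; ring)
      | (simp only [hg1def, id_eq]; push_cast; ring)
      | (push_cast; ring)
  have hg0mono : MonotoneOn g0 (Icc (0:ℝ) 1) := by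
    apply monotoneOn_of_deriv_nonneg (convex_Icc 0 1)
    · apply Continuous.continuousOn
      rw [hg0def]
      exact ((((c_plus (p+2) (by linarith)).sub (c_minus (p+2) (by linarith))).sub
        (continuous_const.mul continuous_id))).sub
        (continuous_const.mul (continuous_pow 3))
    · rw [interior_Icc]; intro A hA
      exact (hg0der A hA).differentiableAt.differentiableWithinAt
    · rw [interior_Icc]; intro A hA
      rw [(hg0der A hA).deriv]
      exact hg1nonneg A ⟨hA.1.le, hA.2.le⟩
  have h0 : g0 0 = 0 := by rw [hg0def]; simp [Real.one_rpow]
  have hfin : 0 ≤ g0 a := by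
    rw [← h0]
    exact hg0mono (left_mem_Icc.2 zero_le_one) ⟨ha.le, ha1⟩ ha.le
  rw [hg0def] at hfin
  simp only at hfin
  linarith

lemma key2 {p A : ℝ} (hp : 0 < p) (hp1 : p ≤ 1) (hA : 1 < A) :
    2*p*A^(p-1) ≤ (1+A)^p - (A-1)^p := by
  set G : ℝ → ℝ := fun u => (A+u)^p - (A-u)^p - (2*p*A^(p-1))*u with hGdef
  have hGder : ∀ u ∈ Ioo (0:ℝ) 1, HasDerivAt G
      (p*(A+u)^(p-1) + p*(A-u)^(p-1) - 2*p*A^(p-1)) u := by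
    intro u hu
    obtain ⟨hu1, hu2⟩ := hu
    have hb1 : HasDerivAt (fun u : ℝ => A + u) 1 u := (hasDerivAt_id u).const_add A
    have hb2 : HasDerivAt (fun u : ℝ => A - u) (-1) u := (hasDerivAt_id u).const_sub A
    have hd1 := hb1.rpow_const (p := p) (Or.inl (by nlinarith : A + u ≠ 0))
    have hd2 := hb2.rpow_const (p := p) (Or.inl (by nlinarith : A - u ≠ 0))
    have h1 := (hd1.sub hd2).sub ((hasDerivAt_id u).const_mul (2*p*A^(p-1)))
    convert! h1 using 1
    all_goals first
      | (funext B; simp only [hGdef, id_eq, Pi.sub_apply, Pi.add_apply]; push_cast; ring)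
      | (simp only [hGdef, id_eq]; push_cast; ring)
      | (push_cast; ring)
  have hGmono : MonotoneOn G (Icc (0:ℝ) 1) := by
    apply monotoneOn_of_deriv_nonneg (convex_Icc 0 1)
    · apply Continuous.continuousOn
      rw [hGdef]
      refine ((Continuous.sub ?_ ?_).sub (continuous_const.mul continuous_id))
      · exact Continuous.rpow_const (continuous_const.add continuous_id) (fun _ => Or.inr hp.le)
      · exact Continuous.rpow_const (continuous_const.sub continuous_id) (fun _ => Or.inr hp.le)
    · rw [interior_Icc]; intro u hu
      exact (hGder u hu).differentiableAt.differentiableWithinAt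
    · rw [interior_Icc]; intro u hu
      rw [(hGder u hu).deriv]
      obtain ⟨hu1, hu2⟩ := hu
      have hmid := mid (u := A+u) (v := A-u) (c := p-1)
        (by nlinarith) (by nlinarith) (by linarith)
      rw [show (A+u+(A-u))/2 = A by ring] at hmid
      nlinarith [mul_nonneg hp.le
        (by linarith : (0:ℝ) ≤ (A+u)^(p-1) + (A-u)^(p-1) - 2*A^(p-1))]
  have hG0 : G 0 = 0 := by rw [hGdef]; simp
  have hfin := hGmono (left_mem_Icc.2 zero_le_one) (right_mem_Icc.2 zero_le_one) zero_le_one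
  rw [hG0, hGdef] at hfin
  simp only at hfin
  rw [add_comm A 1] at hfin
  nlinarith [hfin]

lemma ineq2 {p a : ℝ} (hp : 0 < p) (hp1 : p ≤ 1) (ha : 1 < a) :
    2*(p+2)*(a^p*a) + 2*(p+2)*p*(2-p)/3 - a*(p+2)*p*(1-p) ≤ (1+a)^(p+2) - (a-1)^(p+2) := by
  set h1 : ℝ → ℝ := fun A =>
    (p+2)*(1+A)^(p+1) - (p+2)*(A-1)^(p+1) - (2*(p+2)*(p+1))*A^p + (p+2)*p*(1-p) with hh1def
  set h0 : ℝ → ℝ := fun A =>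
    (1+A)^(p+2) - (A-1)^(p+2) - (2*(p+2))*A^(p+1) - 2*(p+2)*p*(2-p)/3 + ((p+2)*p*(1-p))*A
    with hh0def
  have hIoi : ∀ A ∈ Ioi (1:ℝ), (1 + A ≠ 0 ∧ A - 1 ≠ 0 ∧ A ≠ 0) := by
    intro A hA
    rw [mem_Ioi] at hA
    refine ⟨by intro h; nlinarith, by intro h; nlinarith, by intro h; nlinarith⟩
  have hh1der : ∀ A ∈ Ioi (1:ℝ), HasDerivAt h1
      ((p+2)*(p+1)*((1+A)^p - (A-1)^p - 2*p*A^(p-1))) A := by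
    intro A hA
    obtain ⟨e1, e2, e3⟩ := hIoi A hA
    have hd3 := Real.hasDerivAt_rpow_const (x := A) (p := p) (Or.inl e3)
    have hcomp := ((((hd_plus (p+1) A e1).const_mul (p+2)).sub
      ((hd_sub1 (p+1) A e2).const_mul (p+2))).sub
      (hd3.const_mul (2*(p+2)*(p+1)))).add_const ((p+2)*p*(1-p))
    rw [show p+1-1 = p by ring] at hcomp
    convert! hcomp using 1
    all_goals first
      | (funext B; simp only [hh1def, id_eq, Pi.sub_apply, Pi.add_apply]; push_cast; ring)
      | (simp only [hh1def, id_eq]; push_cast; ring)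
      | (push_cast; ring)
  have hh1mono : MonotoneOn h1 (Ici (1:ℝ)) := by
    apply monotoneOn_of_deriv_nonneg (convex_Ici 1)
    · apply Continuous.continuousOn
      rw [hh1def]
      exact (((continuous_const.mul (c_plus (p+1) (by linarith))).sub
        (continuous_const.mul (c_sub1 (p+1) (by linarith)))).sub
        (continuous_const.mul (c_id p hp.le))).add continuous_const
    · rw [interior_Ici]; intro A hA
      exact (hh1der A hA).differentiableAt.differentiableWithinAt
    · rw [interior_Ici]; intro A hA
      rw [(hh1der A hA).deriv]
      have hk := key2 hp hp1 (mem_Ioi.1 hA)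
      nlinarith [mul_nonneg (le_of_lt (mul_pos (show (0:ℝ) < p+2 by linarith)
        (show (0:ℝ) < p+1 by linarith)))
        (by linarith : (0:ℝ) ≤ (1+A)^p - (A-1)^p - 2*p*A^(p-1))]
  have h2p2 : (2:ℝ)^(p+2) = 2^p * 4 := by
    rw [Real.rpow_add (by norm_num : (0:ℝ) < 2)]
    congr 1
    rw [show (2:ℝ) = ((2:ℕ):ℝ) by norm_num]
    rw [Real.rpow_natCast]
    norm_num
  have h2p1 : (2:ℝ)^(p+1) = 2^p * 2 := by
    rw [Real.rpow_add (by norm_num : (0:ℝ) < 2), Real.rpow_one]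
  have hh1one : 0 ≤ h1 1 := by
    rw [hh1def]
    simp only
    rw [show (1:ℝ)-1 = 0 by ring, Real.zero_rpow (by positivity : p+1 ≠ 0), Real.one_rpow,
      show (1:ℝ)+1 = 2 by norm_num, h2p1,
      Real.rpow_def_of_pos (by norm_num : (0:ℝ) < 2)]
    have hψ := psi_nonneg hp.le hp1
    nlinarith [mul_nonneg (show (0:ℝ) ≤ p+2 by linarith) hψ]
  have hh1nonneg : ∀ A ∈ Ici (1:ℝ), 0 ≤ h1 A := by
    intro A hA
    exact hh1one.trans (hh1mono self_mem_Ici hA hA)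
  have hh0der : ∀ A ∈ Ioi (1:ℝ), HasDerivAt h0 (h1 A) A := by
    intro A hA
    obtain ⟨e1, e2, e3⟩ := hIoi A hA
    have hd3 := Real.hasDerivAt_rpow_const (x := A) (p := p+1) (Or.inl e3)
    have hcomp := ((((hd_plus (p+2) A e1).sub (hd_sub1 (p+2) A e2)).sub
      (hd3.const_mul (2*(p+2)))).sub_const (2*(p+2)*p*(2-p)/3)).add
      ((hasDerivAt_id A).const_mul ((p+2)*p*(1-p)))
    rw [show p+2-1 = p+1 by ring, show p+1-1 = p by ring] at hcomp
    convert! hcomp using 1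
    all_goals first
      | (funext B; simp only [hh0def, id_eq, Pi.sub_apply, Pi.add_apply]; push_cast; ring)
      | (simp only [hh1def, id_eq]; push_cast; ring)
      | (push_cast; ring)
  have hh0mono : MonotoneOn h0 (Ici (1:ℝ)) := by
    apply monotoneOn_of_deriv_nonneg (convex_Ici 1)
    · apply Continuous.continuousOn
      rw [hh0def]
      exact ((((c_plus (p+2) (by linarith)).sub (c_sub1 (p+2) (by linarith))).sub
        (continuous_const.mul (c_id (p+1) (by linarith)))).sub continuous_const).add
        (continuous_const.mul continuous_id)
    · rw [interior_Ici]; intro A hA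
      exact (hh0der A hA).differentiableAt.differentiableWithinAt
    · rw [interior_Ici]; intro A hA
      rw [(hh0der A hA).deriv]
      exact hh1nonneg A (le_of_lt (mem_Ioi.1 hA))
  have hh0one : 0 ≤ h0 1 := by
    rw [hh0def]
    simp only
    rw [show (1:ℝ)-1 = 0 by ring, Real.zero_rpow (by positivity : p+2 ≠ 0), Real.one_rpow,
      show (1:ℝ)+1 = 2 by norm_num, h2p2,
      Real.rpow_def_of_pos (by norm_num : (0:ℝ) < 2)]
    have hφ := phi_nonneg hp.le hp1
    nlinarith [hφ]
  have hfin : 0 ≤ h0 a := hh0one.trans (hh0mono self_mem_Ici (le_of_lt ha) (le_of_lt ha))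
  rw [hh0def] at hfin
  simp only at hfin
  have hpow : a^(p+1) = a^p * a := by
    rw [Real.rpow_add (by linarith : (0:ℝ) < a), Real.rpow_one]
  rw [hpow] at hfin
  linarith


theorem stmt_6 (p : ℝ) (hp : p ∈ Set.Ioc (0 : ℝ) 1) (x : EuclideanSpace ℝ (Fin 3)) (hx : ‖x‖ = 1)
    (a : ℝ) (ha : 0 ≤ a) :
    (a ≤ 1 → 1 + p * (p + 1) / 6 * a ^ 2 ≤
      ∫ z : sphere (0 : EuclideanSpace ℝ (Fin 3)) 1,
        ‖x - a • (z : EuclideanSpace ℝ (Fin 3))‖ ^ p ∂(sphereHaar 3)) ∧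
    (1 < a → a ^ p + p * (2 - p) / (3 * a) - p * (1 - p) / 2 ≤
      ∫ z : sphere (0 : EuclideanSpace ℝ (Fin 3)) 1,
        ‖x - a • (z : EuclideanSpace ℝ (Fin 3))‖ ^ p ∂(sphereHaar 3)) := by
  obtain ⟨hp0, hp1⟩ := hp
  have hGc : Continuous (fun t : ℝ => (1 + a^2 - 2*a*t) ^ (p/2)) := by
    apply Continuous.rpow_const
    · continuity
    · intro t; exact Or.inr (by positivity)
  have hint : ∫ z : sphere (0 : EuclideanSpace ℝ (Fin 3)) 1,
      ‖x - a • (z : EuclideanSpace ℝ (Fin 3))‖ ^ p ∂(sphereHaar 3)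
      = (1/2) * ∫ t in (-1:ℝ)..1, (1 + a^2 - 2*a*t) ^ (p/2) := by
    have hs := sphere_int hx (fun t : ℝ => (1 + a^2 - 2*a*t) ^ (p/2)) hGc
    rw [← hs]
    exact integral_congr_ae (ae_of_all _ (fun z => integrand_eq hp0 hx ha z))
  constructor
  · intro ha1
    rcases ha.eq_or_lt with rfl | hapos
    · rw [hint]
      have hG1 : ∀ t : ℝ, (1 + (0:ℝ)^2 - 2*0*t) ^ (p/2) = 1 := by
        intro t
        norm_num
      rw [intervalIntegral.integral_congr (g := fun _ => (1:ℝ)) (fun t _ => hG1 t),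
        intervalIntegral.integral_const]
      norm_num
    · rw [hint, J_eq hp0 hapos, abs_of_nonneg (by linarith : (0:ℝ) ≤ 1 - a)]
      have ha0 : a ≠ 0 := ne_of_gt hapos
      have hp2 : p + 2 ≠ 0 := by positivity
      rw [show (1/2) * (((1+a)^(p+2) - (1-a)^(p+2))/(a*(p+2)))
        = ((1+a)^(p+2) - (1-a)^(p+2))/(2*a*(p+2)) by rw [div_mul_div_comm, one_mul, ← mul_assoc]]
      rw [le_div_iff₀ (by positivity : (0:ℝ) < 2*a*(p+2))]
      have h := ineq1 hp0 hp1 hapos ha1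
      rw [show (1 + p*(p+1)/6*a^2) * (2*a*(p+2))
        = 2*(p+2)*a + (p+2)*(p+1)*p/3*a^3 by ring]
      exact h
  · intro ha1
    have hapos : (0:ℝ) < a := lt_trans one_pos ha1
    rw [hint, J_eq hp0 hapos, abs_of_neg (by linarith : 1 - a < 0),
      show -(1-a) = a - 1 by ring]
    have ha0 : a ≠ 0 := ne_of_gt hapos
    have hp2 : p + 2 ≠ 0 := by positivity
    rw [show (1/2) * (((1+a)^(p+2) - (a-1)^(p+2))/(a*(p+2)))
      = ((1+a)^(p+2) - (a-1)^(p+2))/(2*a*(p+2)) by rw [div_mul_div_comm, one_mul, ← mul_assoc]]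
    rw [le_div_iff₀ (by positivity : (0:ℝ) < 2*a*(p+2))]
    have h := ineq2 hp0 hp1 ha1
    rw [show (a^p + p*(2-p)/(3*a) - p*(1-p)/2) * (2*a*(p+2))
      = 2*(p+2)*(a^p*a) + 2*(p+2)*p*(2-p)/3 - a*(p+2)*p*(1-p) by
        field_simp]
    exact h
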